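/- For every n ≥ 1 one has ν_n = (R∘F) ∘ ν_{n+1}, and the induced ring homomorphism ν : W(A^♭) → lim_n W_n(A/pA), where the inverse limit is taken along the transition maps R∘F : W_{n+1}(A/pA) → W_n(A/pA), is bijective. -/

import Mathlib

private lemma perf_coeff_pow {R : Type*} [CommSemiring R] {p : ℕ} [Fact p.Prime] [CharP R p]
    (f : Perfection R p) (m j : ℕ) :
    Perfection.coeff R p (m + j) f ^ p ^ j = Perfection.coeff R p m f := by
  induction j with
  | zero => simp
  | succ j ih =>
    rw [pow_succ', pow_mul, ← Nat.add_assoc, Perfection.coeff_pow_p', ih]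

/-- Let `p` be a prime, `A` a `ℤ_(p)`-algebra with `A/pA` nonzero (hence of
characteristic `p`), and `A^♭ = lim_{x ↦ x^p} A/pA` its perfection, with projections
`pr_n`.  Let `ν_n : W(A^♭) → W_n(A/pA)` be the composite of `W(pr_n)` with truncation.
Then `ν_n = (R∘F) ∘ ν_{n+1}` for every `n`, and the induced map
`ν : W(A^♭) → lim_n W_n(A/pA)` (inverse limit along the transition maps
`R∘F : W_{n+1}(A/pA) → W_n(A/pA)`, characterized on truncations of full Witt vectors by
`(R∘F)(truncate_{n+1} w) = truncate_n (F w)`) is bijective; bijectivity is expressed by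
injectivity into the product together with surjectivity onto all compatible families. -/
theorem statement16 (p : ℕ) [Fact p.Prime] {A : Type*} [CommRing A]
    (hA : ∀ k : ℕ, ¬ p ∣ k → IsUnit (k : A))
    [Nontrivial (A ⧸ Ideal.span {(p : A)})] [CharP (A ⧸ Ideal.span {(p : A)}) p] :
    (∀ (n : ℕ) (x : WittVector p (Ring.Perfection (A ⧸ Ideal.span {(p : A)}) p)),
      WittVector.truncate n
          (WittVector.map (Perfection.coeff (A ⧸ Ideal.span {(p : A)}) p n) x) =
        WittVector.truncate n (WittVector.frobenius
          (WittVector.map (Perfection.coeff (A ⧸ Ideal.span {(p : A)}) p (n + 1)) x))) ∧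
    (∀ x y : WittVector p (Ring.Perfection (A ⧸ Ideal.span {(p : A)}) p),
      (∀ n, WittVector.truncate n
            (WittVector.map (Perfection.coeff (A ⧸ Ideal.span {(p : A)}) p n) x) =
          WittVector.truncate n
            (WittVector.map (Perfection.coeff (A ⧸ Ideal.span {(p : A)}) p n) y)) →
      x = y) ∧
    (∀ g : ∀ n, TruncatedWittVector p n (A ⧸ Ideal.span {(p : A)}),
      (∀ (n : ℕ) (w : WittVector p (A ⧸ Ideal.span {(p : A)})),
        WittVector.truncate (n + 1) w = g (n + 1) →
        WittVector.truncate n (WittVector.frobenius w) = g n) →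
      ∃ x : WittVector p (Ring.Perfection (A ⧸ Ideal.span {(p : A)}) p),
        ∀ n, WittVector.truncate n
            (WittVector.map (Perfection.coeff (A ⧸ Ideal.span {(p : A)}) p n) x) = g n) := by
  delta Ring.Perfection
  set R := A ⧸ Ideal.span {(p : A)} with hR
  refine ⟨?_, ?_, ?_⟩
  · -- part 1
    intro n x
    congr 1
    apply WittVector.ext
    intro k
    rw [WittVector.frobenius_eq_map_frobenius, WittVector.map_coeff, WittVector.map_coeff,
      WittVector.map_coeff, frobenius_def, Perfection.coeff_pow_p']
  · -- part 2: injectivity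
    intro x y h
    apply WittVector.ext
    intro k
    apply Perfection.ext
    intro m
    have h' := h (m + (k + 1))
    have hk : k < m + (k + 1) := by omega
    have := congrArg (fun z => TruncatedWittVector.coeff ⟨k, hk⟩ z) h'
    simp only [WittVector.coeff_truncate, WittVector.map_coeff] at this
    have hx := perf_coeff_pow (p := p) (x.coeff k) m (k + 1)
    have hy := perf_coeff_pow (p := p) (y.coeff k) m (k + 1)
    rw [← hx, ← hy, this]
  · -- part 3: surjectivity
    intro g hg
    -- basic compatibility of coefficients
    have claim : ∀ (n k : ℕ) (hk : k < n),
        (g n).coeff ⟨k, hk⟩ = (g (n + 1)).coeff ⟨k, by omega⟩ ^ p := by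
      intro n k hk
      obtain ⟨w, hw⟩ := WittVector.truncate_surjective p (n + 1) R (g (n + 1))
      have h1 := hg n w hw
      have h2 := congrArg (fun z => TruncatedWittVector.coeff ⟨k, hk⟩ z) h1
      have h3 := congrArg (fun z => TruncatedWittVector.coeff ⟨k, by omega⟩ z) hw
      simp only [WittVector.coeff_truncate] at h2 h3
      rw [← h2, ← h3, WittVector.frobenius_eq_map_frobenius, WittVector.map_coeff,
        frobenius_def]
    -- iterated compatibility
    have claim' : ∀ (m n k : ℕ) (hk : k < n) (hnm : n ≤ m),
        (g n).coeff ⟨k, hk⟩ = (g m).coeff ⟨k, by omega⟩ ^ p ^ (m - n) := by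
      intro m
      induction m with
      | zero => intro n k hk hnm; interval_cases n; omega
      | succ m ih =>
        intro n k hk hnm
        rcases Nat.lt_or_ge n (m + 1) with h | h
        · have hnm' : n ≤ m := by omega
          rw [ih n k hk hnm', claim m k (by omega), ← pow_mul, ← pow_succ',
            show m - n + 1 = m + 1 - n from by omega]
        · have : n = m + 1 := by omega
          subst this
          simp
    refine ⟨WittVector.mk p (fun k =>
      ⟨fun n => (g (k + 1 + n)).coeff ⟨k, by omega⟩ ^ p ^ (k + 1), ?_⟩), ?_⟩
    · intro n
      show ((g (k + 1 + n + 1)).coeff ⟨k, by omega⟩ ^ p ^ (k + 1)) ^ p =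
        (g (k + 1 + n)).coeff ⟨k, by omega⟩ ^ p ^ (k + 1)
      rw [claim (k + 1 + n) k (by omega), ← pow_mul, ← pow_mul, Nat.mul_comm]
    · intro n
      apply TruncatedWittVector.ext
      rintro ⟨k, hk⟩
      rw [WittVector.coeff_truncate, WittVector.map_coeff]
      show ((g (k + 1 + n)).coeff ⟨k, by omega⟩ ^ p ^ (k + 1)) = (g n).coeff ⟨k, hk⟩
      rw [claim' (k + 1 + n) n k hk (by omega),
        show k + 1 + n - n = k + 1 from by omega]
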